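/- If an a.d.-family 𝒜 contains a 2-Luzin gap, then the splitting partial order ℙ_𝒜 fails to satisfy the c.c.c., i.e., ℙ_𝒜 has an uncountable antichain. In particular, ℙ_𝒜 fails the c.c.c. whenever 𝒜 is a Luzin family. -/

import Mathlib

open Set Filter Cardinal

noncomputable section

/-- The Banach space `ℓ∞` of bounded real sequences with the sup norm. -/
abbrev Linfty : Type := lp (fun _ : ℕ => ℝ) ⊤

/-- An a.d.-family: an uncountable family of infinite subsets of `ℕ` which is
pairwise almost disjoint. -/
def ADFamily (𝒜 : Set (Set ℕ)) : Prop :=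
  ¬𝒜.Countable ∧ (∀ A ∈ 𝒜, A.Infinite) ∧
    ∀ A ∈ 𝒜, ∀ B ∈ 𝒜, A ≠ B → (A ∩ B).Finite

/-- A maximal a.d.-family. -/
def MaximalADFamily (𝒜 : Set (Set ℕ)) : Prop :=
  ADFamily 𝒜 ∧ ∀ X : Set ℕ, X.Infinite → ∃ A ∈ 𝒜, (X ∩ A).Infinite

/-- `A =* B` : the symmetric difference is finite. -/
def eqStar (A B : Set ℕ) : Prop := (symmDiff A B).Finite

/-- Finite subfamilies `a`, `b` of `𝒜` represent the pair `p`. -/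
def Represents (𝒜 : Set (Set ℕ)) (p : Set ℕ × Set ℕ) (a b : Finset (Set ℕ)) : Prop :=
  ↑a ⊆ 𝒜 ∧ ↑b ⊆ 𝒜 ∧ eqStar p.1 (⋃ A ∈ a, A) ∧ eqStar p.2 (⋃ B ∈ b, B)

/-- `p` is a condition of the splitting partial order `ℙ_𝒜`. -/
def SplitCond (𝒜 : Set (Set ℕ)) (p : Set ℕ × Set ℕ) : Prop :=
  p.1 ∩ p.2 = ∅ ∧ ∃ a b : Finset (Set ℕ), Represents 𝒜 p a b

/-- `Extends p q` means `p ≤ q` in `ℙ_𝒜`. -/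
def Extends (p q : Set ℕ × Set ℕ) : Prop := q.1 ⊆ p.1 ∧ q.2 ⊆ p.2

/-- Compatibility in `ℙ_𝒜`. -/
def Compat (𝒜 : Set (Set ℕ)) (p q : Set ℕ × Set ℕ) : Prop :=
  ∃ r, SplitCond 𝒜 r ∧ Extends r p ∧ Extends r q

/-- An antichain of `ℙ_𝒜`: a set of pairwise incompatible conditions. -/
def SplitAntichain (𝒜 : Set (Set ℕ)) (P : Set (Set ℕ × Set ℕ)) : Prop :=
  (∀ p ∈ P, SplitCond 𝒜 p) ∧ ∀ p ∈ P, ∀ q ∈ P, p ≠ q → ¬Compat 𝒜 p q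

/-- `ℙ_𝒜` satisfies the countable chain condition. -/
def SplitCCC (𝒜 : Set (Set ℕ)) : Prop :=
  ∀ P : Set (Set ℕ × Set ℕ), SplitAntichain 𝒜 P → P.Countable

/-- A centered subset of `ℙ_𝒜`: every finite subset has a common lower bound in `ℙ_𝒜`. -/
def SplitCentered (𝒜 : Set (Set ℕ)) (P : Set (Set ℕ × Set ℕ)) : Prop :=
  ∀ F : Finset (Set ℕ × Set ℕ), ↑F ⊆ P →
    ∃ r, SplitCond 𝒜 r ∧ ∀ p ∈ F, Extends r p

/-- `ℙ_𝒜` is σ-centered. -/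
def SplitSigmaCentered (𝒜 : Set (Set ℕ)) : Prop :=
  ∃ P : ℕ → Set (Set ℕ × Set ℕ),
    (⋃ n, P n) = {p | SplitCond 𝒜 p} ∧ ∀ n, SplitCentered 𝒜 (P n)

/-- `ℙ_𝒜` has precaliber `κ`. -/
def SplitPrecaliber (𝒜 : Set (Set ℕ)) (κ : Cardinal) : Prop :=
  ∀ P : Set (Set ℕ × Set ℕ), (∀ p ∈ P, SplitCond 𝒜 p) → #P = κ →
    ∃ Q ⊆ P, #Q = κ ∧ SplitCentered 𝒜 Q

/-- Two conditions are essentially distinct if their (uniquely determined)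
representing finite subfamilies differ on both coordinates. -/
def EssDistinct (𝒜 : Set (Set ℕ)) (p q : Set ℕ × Set ℕ) : Prop :=
  ∀ ap bp aq bq : Finset (Set ℕ), Represents 𝒜 p ap bp → Represents 𝒜 q aq bq →
    ap ≠ aq ∧ bp ≠ bq

/-- An antiramsey a.d.-family. -/
def Antiramsey (𝒜 : Set (Set ℕ)) : Prop :=
  ADFamily 𝒜 ∧
  ∀ P : Set (Set ℕ × Set ℕ), (∀ p ∈ P, SplitCond 𝒜 p) → ¬P.Countable →
    (∀ p ∈ P, ∀ q ∈ P, p ≠ q → EssDistinct 𝒜 p q) →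
    (∃ p ∈ P, ∃ q ∈ P, p ≠ q ∧ Compat 𝒜 p q) ∧ (∃ p ∈ P, ∃ q ∈ P, ¬Compat 𝒜 p q)

/-- The first uncountable ordinal. -/
def omega1 : Ordinal.{0} := (Cardinal.aleph 1).ord

/-- A Luzin family. -/
def IsLuzinFamily (𝒜 : Set (Set ℕ)) : Prop :=
  ADFamily 𝒜 ∧ ∃ A : Ordinal.{0} → Set ℕ,
    (∀ ξ < omega1, A ξ ∈ 𝒜) ∧
    (∀ B ∈ 𝒜, ∃ ξ < omega1, A ξ = B) ∧
    (∀ ξ < omega1, ∀ η < omega1, ξ ≠ η → A ξ ≠ A η) ∧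
    ∀ η < omega1, ∀ m : ℕ, {ξ : Ordinal | ξ < η ∧ sSup (A ξ ∩ A η) = m}.Finite

/-- `(B i : i < n)` forms an `n`-Luzin gap. -/
def IsNLuzinGap (n : ℕ) (B : Fin n → Ordinal.{0} → Set ℕ) : Prop :=
  (∀ i : Fin n, ∀ α < omega1, ∀ β < omega1, α ≠ β → B i α ≠ B i β) ∧
  (∀ i j : Fin n, i ≠ j → ∀ α < omega1, ∀ β < omega1, B i α ≠ B j β) ∧
  ∃ m : ℕ,
    (∀ i j : Fin n, i < j → ∀ α < omega1, B i α ∩ B j α ⊆ Set.Iio m) ∧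
    (∀ α < omega1, ∀ β < omega1, α ≠ β →
      ¬(⋃ (i : Fin n) (j : Fin n) (_ : i ≠ j), B i α ∩ B j β) ⊆ Set.Iio m)

/-- `𝒜` contains an `n`-Luzin gap. -/
def ContainsNLuzinGap (𝒜 : Set (Set ℕ)) (n : ℕ) : Prop :=
  ∃ B : Fin n → Ordinal.{0} → Set ℕ,
    (∀ i : Fin n, ∀ α < omega1, B i α ∈ 𝒜) ∧ IsNLuzinGap n B

-- The characteristic function of `A ⊆ ℕ` as an element of `ℓ∞`.
open Classical in
def indicatorLinfty (A : Set ℕ) : Linfty :=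
  ⟨fun n => if n ∈ A then (1 : ℝ) else 0, by
    apply memℓp_infty
    refine ⟨1, ?_⟩
    rintro x ⟨n, rfl⟩
    dsimp only
    split <;> simp⟩

/-- The subset `c₀` of `ℓ∞`. -/
def c0Set : Set Linfty := {f | Tendsto (fun n => f n) atTop (nhds 0)}

/-- The Johnson–Lindenstrauss space `X_𝒜`: the closed linear span of
`c₀ ∪ {1_A : A ∈ 𝒜}` in `ℓ∞`, as a (closed) submodule. -/
def XA (𝒜 : Set (Set ℕ)) : Submodule ℝ Linfty :=
  (Submodule.span ℝ (c0Set ∪ indicatorLinfty '' 𝒜)).topologicalClosure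

/-- The norm `‖·‖_{∞,2}` on `ℓ∞`. -/
def norm12 (f : Linfty) : ℝ :=
  ‖f‖ + Real.sqrt (∑' n : ℕ, (f n) ^ 2 / 2 ^ (n + 1))

/-- The unit sphere of `(X_𝒜, ‖·‖∞)`. -/
def sphereInf (𝒜 : Set (Set ℕ)) : Set Linfty :=
  {f : Linfty | f ∈ XA 𝒜 ∧ ‖f‖ = 1}

/-- The unit sphere of `(X_𝒜, ‖·‖_{∞,2})`. -/
def sphere12 (𝒜 : Set (Set ℕ)) : Set Linfty :=
  {f : Linfty | f ∈ XA 𝒜 ∧ norm12 f = 1}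

/-- The Open Coloring Axiom. -/
def OCA : Prop :=
  ∀ (X : Type) [MetricSpace X], TopologicalSpace.SeparableSpace X →
    ∀ K : Set (X × X), IsOpen K → (∀ x y : X, (x, y) ∈ K → (y, x) ∈ K) →
      (∃ Y : Set X, ¬Y.Countable ∧ ∀ x ∈ Y, ∀ y ∈ Y, x ≠ y → (x, y) ∈ K) ∨
      (∃ C : ℕ → Set X, (⋃ n, C n) = Set.univ ∧
        ∀ n, ∀ x ∈ C n, ∀ y ∈ C n, x ≠ y → (x, y) ∉ K)

/-- An `ℝ`-embeddable a.d.-family. -/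
def REmbeddable (𝒜 : Set (Set ℕ)) : Prop :=
  ∃ (f : ℕ → ℚ) (r : Set ℕ → ℝ), Function.Injective f ∧
    (∀ A ∈ 𝒜, Irrational (r A) ∧
      ∀ ε : ℝ, 0 < ε → {n ∈ A | ε ≤ |(f n : ℝ) - r A|}.Finite) ∧
    (∀ A ∈ 𝒜, ∀ B ∈ 𝒜, A ≠ B → r A ≠ r B)

/-- The Continuum Hypothesis. -/
def CH : Prop := (Cardinal.continuum : Cardinal.{0}) = Cardinal.aleph 1

end


/-! ### Auxiliary lemmas for statement 6 -/

section Aux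

open Set Cardinal

lemma countable_Iio_of_lt_omega1 {δ : Ordinal.{0}} (h : δ < omega1) : (Set.Iio δ).Countable := by
  rw [Cardinal.countable_iff_lt_aleph_one, Ordinal.mk_Iio_ordinal]
  have : δ.card < ℵ₁ := Cardinal.lt_ord.mp h
  calc Cardinal.lift.{1} δ.card < Cardinal.lift.{1} ℵ₁ := Cardinal.lift_lt.mpr this
    _ = ℵ₁ := by rw [Cardinal.lift_aleph, Ordinal.lift_one]

lemma not_countable_Iio_omega1 : ¬(Set.Iio omega1 : Set Ordinal.{0}).Countable := by
  rw [Cardinal.countable_iff_lt_aleph_one, Ordinal.mk_Iio_ordinal]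
  simp [omega1, Cardinal.card_ord, Cardinal.lift_aleph, Ordinal.lift_one]

lemma exists_uncountable_fiber {α : Type*} {S : Set α} (hS : ¬S.Countable) (g : α → ℕ) :
    ∃ n, ¬{x | x ∈ S ∧ g x = n}.Countable := by
  by_contra h
  push_neg at h
  refine hS <| (Set.countable_iUnion (fun n => h n)).mono (fun x hx => ?_)
  exact Set.mem_iUnion.mpr ⟨g x, hx, rfl⟩

noncomputable section AvoidSeq

def badSet (G : Ordinal.{0} → Set Ordinal.{0}) (δ : Ordinal.{0})
    (f : ∀ ε, ε < δ → Ordinal.{0}) : Set Ordinal.{0} :=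
  {x | ∃ ε, ∃ h : ε < δ, x = f ε h ∨ x ∈ G (f ε h)}

open Classical in
def avoidSeq (S : Set Ordinal.{0}) (G : Ordinal.{0} → Set Ordinal.{0}) :
    Ordinal.{0} → Ordinal.{0} :=
  Ordinal.lt_wf.fix fun δ ih =>
    if hne : (S \ badSet G δ ih).Nonempty then Ordinal.lt_wf.min _ hne else 0

open Classical in
lemma avoidSeq_eq (S : Set Ordinal.{0}) (G : Ordinal.{0} → Set Ordinal.{0}) (δ : Ordinal.{0}) :
    avoidSeq S G δ =
      if hne : (S \ badSet G δ (fun ε _ => avoidSeq S G ε)).Nonempty then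
        Ordinal.lt_wf.min _ hne else 0 :=
  Ordinal.lt_wf.fix_eq _ δ

lemma avoidSeq_spec {S : Set Ordinal.{0}} {G : Ordinal.{0} → Set Ordinal.{0}}
    (hS : ¬S.Countable) (hG : ∀ x ∈ S, (G x).Countable) :
    ∀ δ, δ < omega1 → avoidSeq S G δ ∈ S ∧
      ∀ ε, ε < δ → avoidSeq S G δ ≠ avoidSeq S G ε ∧ avoidSeq S G δ ∉ G (avoidSeq S G ε) := by
  intro δ
  induction δ using Ordinal.induction with
  | h δ IH =>
    intro hδ
    have hBadc : (badSet G δ (fun ε _ => avoidSeq S G ε)).Countable := by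
      have hIio : (Set.Iio δ).Countable := countable_Iio_of_lt_omega1 hδ
      have := hIio.to_subtype
      have hsub : badSet G δ (fun ε _ => avoidSeq S G ε) ⊆
          ⋃ ε : Set.Iio δ, ({avoidSeq S G ε.1} ∪ G (avoidSeq S G ε.1)) := by
        rintro x ⟨ε, hε, hx⟩
        exact Set.mem_iUnion.mpr ⟨⟨ε, hε⟩, by simpa using hx⟩
      refine (Set.countable_iUnion (fun ε : Set.Iio δ => ?_)).mono hsub
      exact (Set.countable_singleton _).union (hG _ ((IH ε.1 ε.2 (ε.2.trans hδ)).1))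
    have hne : (S \ badSet G δ (fun ε _ => avoidSeq S G ε)).Nonempty := by
      rw [Set.nonempty_iff_ne_empty]
      intro hemp
      rw [Set.diff_eq_empty] at hemp
      exact hS (hBadc.mono hemp)
    have hmem : avoidSeq S G δ ∈ S \ badSet G δ (fun ε _ => avoidSeq S G ε) := by
      rw [avoidSeq_eq, dif_pos hne]
      exact Ordinal.lt_wf.min_mem _ hne
    refine ⟨hmem.1, fun ε hε => ?_⟩
    have h2 := hmem.2
    exact ⟨fun heq => h2 ⟨ε, hε, Or.inl heq⟩, fun hmemG => h2 ⟨ε, hε, Or.inr hmemG⟩⟩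

end AvoidSeq

lemma freeSet : ∀ (n : ℕ) (S : Set Ordinal.{0}) (F : Ordinal.{0} → Set Ordinal.{0}),
    ¬S.Countable → (∀ β ∈ S, (F β).Finite ∧ (F β).ncard = n) →
    ∃ T, T ⊆ S ∧ ¬T.Countable ∧ ∀ α ∈ T, ∀ β ∈ T, α ≠ β → α ∉ F β := by
  intro n
  induction n with
  | zero =>
    intro S F hS hF
    refine ⟨S, subset_rfl, hS, fun α hα β hβ _ hmem => ?_⟩
    have := (Set.ncard_eq_zero (hF β hβ).1).mp (hF β hβ).2
    rw [this] at hmem; exact hmem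
  | succ n IH =>
    intro S F hS hF
    by_cases hcase : ∃ γ, ¬{β | β ∈ S ∧ γ ∈ F β}.Countable
    · obtain ⟨γ, hU⟩ := hcase
      set U := {β | β ∈ S ∧ γ ∈ F β} with hUdef
      have hFU : ∀ β ∈ U, (F β \ {γ}).Finite ∧ (F β \ {γ}).ncard = n := by
        intro β hβ
        refine ⟨((hF β hβ.1).1).diff, ?_⟩
        rw [Set.ncard_diff_singleton_of_mem hβ.2, (hF β hβ.1).2]
        omega
      obtain ⟨T₀, hT₀U, hT₀unc, hT₀free⟩ := IH U (fun β => F β \ {γ}) hU hFU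
      refine ⟨T₀ \ {γ}, fun x hx => (hT₀U hx.1).1, ?_, ?_⟩
      · intro hc
        exact hT₀unc ((hc.union (Set.countable_singleton γ)).mono
          (fun x hx => by by_cases h : x = γ <;> simp [h, hx]))
      · intro α hα β hβ hne hmem
        have : α ∈ F β \ {γ} := ⟨hmem, hα.2⟩
        exact hT₀free α hα.1 β hβ.1 hne this
    · push_neg at hcase
      set G := fun x => F x ∪ {β | β ∈ S ∧ x ∈ F β} with hGdef
      have hG : ∀ x ∈ S, (G x).Countable := fun x hx =>
        ((hF x hx).1.countable).union (hcase x)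
      refine ⟨avoidSeq S G '' Set.Iio omega1, ?_, ?_, ?_⟩
      · rintro x ⟨a, ha, rfl⟩; exact (avoidSeq_spec hS hG a ha).1
      · intro hc
        have hinj : Set.InjOn (avoidSeq S G) (Set.Iio omega1) := by
          intro a ha b hb heq
          rcases lt_trichotomy a b with h | h | h
          · exact absurd heq.symm ((avoidSeq_spec hS hG b hb).2 a h).1
          · exact h
          · exact absurd heq ((avoidSeq_spec hS hG a ha).2 b h).1
        exact not_countable_Iio_omega1 (Set.countable_of_injective_of_countable_image hinj hc)
      · rintro α ⟨a, ha, rfl⟩ β ⟨b, hb, rfl⟩ hne hmem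
        have hbS : avoidSeq S G b ∈ S := (avoidSeq_spec hS hG b hb).1
        rcases lt_trichotomy a b with h | h | h
        · exact ((avoidSeq_spec hS hG b hb).2 a h).2 (Or.inr ⟨hbS, hmem⟩)
        · exact hne (by rw [h])
        · exact ((avoidSeq_spec hS hG a ha).2 b h).2 (Or.inl hmem)

lemma two_mul_succ_lt {α β : Ordinal.{0}} (h : α < β) : 2*α+1 < 2*β :=
  calc 2*α+1 < 2*α+2 := add_lt_add_right (by norm_num : (1:Ordinal.{0}) < 2) _
    _ = 2*(α+1) := by rw [mul_add, mul_one]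
    _ ≤ 2*β := by
        apply (mul_le_mul_iff_right₀ (by norm_num : (0:Ordinal) < 2)).mpr
        rw [Ordinal.add_one_eq_succ]
        exact Order.succ_le_of_lt h

lemma two_mul_lt_of_lt {α β : Ordinal.{0}} (h : α < β) : 2*α < 2*β :=
  lt_of_le_of_lt le_self_add (two_mul_succ_lt h)

lemma lt_self_add_one (α : Ordinal.{0}) : α < α + 1 := by
  rw [Ordinal.add_one_eq_succ]; exact Order.lt_succ α

lemma two_mul_add_one_lt_omega1 {α : Ordinal.{0}} (h : α < omega1) : 2*α+1 < omega1 := by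
  apply Cardinal.lt_ord.mpr
  have h1 : α.card < ℵ₁ := Cardinal.lt_ord.mp h
  have h2 : α.card ≤ ℵ₀ := by rwa [← Cardinal.succ_aleph0, Order.lt_succ_iff] at h1
  have hc : (2*α+1 : Ordinal).card = 2 * α.card + 1 := by
    simp [Ordinal.card_add, Ordinal.card_mul, Ordinal.card_one]
  rw [hc]
  calc 2 * α.card + 1 ≤ ℵ₀ * ℵ₀ + ℵ₀ := by
        gcongr
        · exact (Cardinal.nat_lt_aleph0 2).le.trans_eq' (by norm_num)
        · exact Cardinal.one_le_aleph0
    _ = ℵ₀ := by rw [Cardinal.aleph0_mul_aleph0, Cardinal.aleph0_add_aleph0]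
    _ < ℵ₁ := Cardinal.aleph0_lt_aleph_one

lemma two_mul_lt_omega1 {α : Ordinal.{0}} (h : α < omega1) : 2*α < omega1 :=
  lt_of_le_of_lt le_self_add (two_mul_add_one_lt_omega1 h)

lemma two_mul_injective : Function.Injective (fun α : Ordinal.{0} => 2*α) := by
  intro a b hab
  by_contra hne
  rcases lt_or_gt_of_ne hne with h | h
  · exact absurd hab (ne_of_lt (two_mul_lt_of_lt h))
  · exact absurd hab.symm (ne_of_lt (two_mul_lt_of_lt h))

lemma idx_ne_one {τ σ : Ordinal.{0}} (h : τ ≠ σ) : 2*τ+1 ≠ 2*σ+1 := by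
  intro heq
  rcases lt_or_gt_of_ne h with h' | h'
  · exact absurd heq (ne_of_lt ((two_mul_succ_lt h').trans_le le_self_add))
  · exact absurd heq.symm (ne_of_lt ((two_mul_succ_lt h').trans_le le_self_add))

lemma idx_ne_mixed (τ σ : Ordinal.{0}) : 2*τ ≠ 2*σ+1 := by
  intro heq
  rcases lt_trichotomy τ σ with h | h | h
  · exact absurd heq (ne_of_lt ((two_mul_lt_of_lt h).trans (lt_self_add_one _)))
  · subst h; exact absurd heq (ne_of_lt (lt_self_add_one _))
  · exact absurd heq.symm (ne_of_lt (two_mul_succ_lt h))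

lemma exists_omega1_enum {S : Set Ordinal.{0}} (hS : ¬S.Countable) :
    ∃ e : Ordinal.{0} → Ordinal.{0}, (∀ α, α < omega1 → e α ∈ S) ∧
      (∀ α, α < omega1 → ∀ β, β < omega1 → α ≠ β → e α ≠ e β) := by
  have h1 : ℵ₁ ≤ #S := by
    rw [Cardinal.countable_iff_lt_aleph_one] at hS; exact not_lt.mp hS
  have h2 : #(Set.Iio omega1) ≤ #S := by
    rw [Ordinal.mk_Iio_ordinal]
    show Cardinal.lift.{1} (Ordinal.card omega1) ≤ _
    rw [omega1, Cardinal.card_ord, Cardinal.lift_aleph, Ordinal.lift_one]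
    exact h1
  obtain ⟨f⟩ := (Cardinal.le_def _ _).mp h2
  refine ⟨fun α => if h : α < omega1 then (f ⟨α, h⟩ : Ordinal) else 0, fun α hα => ?_, ?_⟩
  · show (if h : α < omega1 then (f ⟨α, h⟩ : Ordinal) else 0) ∈ S
    rw [dif_pos hα]; exact (f ⟨α, hα⟩).2
  · intro α hα β hβ hne
    show (if h : α < omega1 then (f ⟨α, h⟩ : Ordinal) else 0) ≠
      (if h : β < omega1 then (f ⟨β, h⟩ : Ordinal) else 0)
    rw [dif_pos hα, dif_pos hβ]
    intro heq
    exact hne (Subtype.ext_iff.mp (f.injective (Subtype.ext heq)))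

lemma gap_to_antichain {𝒜 : Set (Set ℕ)} (hgap : ContainsNLuzinGap 𝒜 2) :
    ∃ P : Set (Set ℕ × Set ℕ), SplitAntichain 𝒜 P ∧ ¬P.Countable := by
  obtain ⟨B, hBmem, hinj1, hinj2, m, hm1, hm2⟩ := hgap
  set p : Ordinal.{0} → Set ℕ × Set ℕ :=
    fun α => (B 0 α \ Set.Iio m, B 1 α \ Set.Iio m) with hp
  have hcond : ∀ α, α < omega1 → SplitCond 𝒜 (p α) := by
    intro α hα
    constructor
    · apply Set.eq_empty_iff_forall_notMem.mpr
      rintro x ⟨⟨hx0, hxm⟩, hx1, -⟩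
      exact hxm (hm1 0 1 (by decide) α hα ⟨hx0, hx1⟩)
    · refine ⟨{B 0 α}, {B 1 α}, ?_, ?_, ?_, ?_⟩
      · simpa using hBmem 0 α hα
      · simpa using hBmem 1 α hα
      · show (symmDiff (B 0 α \ Set.Iio m) (⋃ A ∈ ({B 0 α} : Finset (Set ℕ)), A)).Finite
        have hU : (⋃ A ∈ ({B 0 α} : Finset (Set ℕ)), (A : Set ℕ)) = B 0 α := by simp
        rw [hU]
        apply (Set.finite_Iio m).subset
        intro x hx
        rcases Set.mem_symmDiff.mp hx with ⟨⟨h1, -⟩, h2⟩ | ⟨h1, h2⟩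
        · exact absurd h1 h2
        · by_contra hxm
          exact h2 ⟨h1, hxm⟩
      · show (symmDiff (B 1 α \ Set.Iio m) (⋃ A ∈ ({B 1 α} : Finset (Set ℕ)), A)).Finite
        have hU : (⋃ A ∈ ({B 1 α} : Finset (Set ℕ)), (A : Set ℕ)) = B 1 α := by simp
        rw [hU]
        apply (Set.finite_Iio m).subset
        intro x hx
        rcases Set.mem_symmDiff.mp hx with ⟨⟨h1, -⟩, h2⟩ | ⟨h1, h2⟩
        · exact absurd h1 h2
        · by_contra hxm
          exact h2 ⟨h1, hxm⟩
  have hincomp : ∀ α, α < omega1 → ∀ β, β < omega1 → α ≠ β →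
      ¬Compat 𝒜 (p α) (p β) := by
    rintro α hα β hβ hne ⟨r, hrC, hrα, hrβ⟩
    obtain ⟨x, hxU, hxm⟩ := Set.not_subset.mp (hm2 α hα β hβ hne)
    simp only [Set.mem_iUnion] at hxU
    obtain ⟨i, j, hij, hx⟩ := hxU
    have hdisj := hrC.1
    fin_cases i <;> fin_cases j <;> simp only at hij hx
    · exact hij rfl
    · have h1 : x ∈ r.1 := hrα.1 ⟨hx.1, hxm⟩
      have h2 : x ∈ r.2 := hrβ.2 ⟨hx.2, hxm⟩
      have : x ∈ r.1 ∩ r.2 := ⟨h1, h2⟩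
      rw [hdisj] at this
      exact this
    · have h1 : x ∈ r.2 := hrα.2 ⟨hx.1, hxm⟩
      have h2 : x ∈ r.1 := hrβ.1 ⟨hx.2, hxm⟩
      have : x ∈ r.1 ∩ r.2 := ⟨h2, h1⟩
      rw [hdisj] at this
      exact this
    · exact hij rfl
  have hpinj : ∀ α, α < omega1 → ∀ β, β < omega1 → α ≠ β → p α ≠ p β := by
    intro α hα β hβ hne heq
    obtain ⟨x, hxU, hxm⟩ := Set.not_subset.mp (hm2 α hα β hβ hne)
    simp only [Set.mem_iUnion] at hxU
    obtain ⟨i, j, hij, hx⟩ := hxU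
    fin_cases i <;> fin_cases j <;> simp only at hij hx
    · exact hij rfl
    · have h1 : x ∈ (p α).1 := ⟨hx.1, hxm⟩
      rw [heq] at h1
      exact hxm (hm1 0 1 (by decide) β hβ ⟨h1.1, hx.2⟩)
    · have h1 : x ∈ (p α).2 := ⟨hx.1, hxm⟩
      rw [heq] at h1
      exact hxm (hm1 0 1 (by decide) β hβ ⟨hx.2, h1.1⟩)
    · exact hij rfl
  refine ⟨p '' Set.Iio omega1, ⟨?_, ?_⟩, ?_⟩
  · rintro q ⟨α, hα, rfl⟩
    exact hcond α hα
  · rintro q ⟨α, hα, rfl⟩ q' ⟨β, hβ, rfl⟩ hne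
    have hab : α ≠ β := fun h => hne (by rw [h])
    exact hincomp α hα β hβ hab
  · intro hc
    have hinj : Set.InjOn p (Set.Iio omega1) := by
      intro a ha b hb heq
      by_contra hne
      exact hpinj a ha b hb hne heq
    exact not_countable_Iio_omega1 (Set.countable_of_injective_of_countable_image hinj hc)

lemma luzin_to_gap {𝒜 : Set (Set ℕ)} (h𝒜 : ADFamily 𝒜) (hL : IsLuzinFamily 𝒜) :
    ContainsNLuzinGap 𝒜 2 := by
  obtain ⟨-, A, hAmem, -, hAinj, hLuz⟩ := hL
  have hint : ∀ ξ η, ξ < omega1 → η < omega1 → ξ ≠ η → (A ξ ∩ A η).Finite := by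
    intro ξ η hξ hη hne
    exact h𝒜.2.2 (A ξ) (hAmem ξ hξ) (A η) (hAmem η hη) (hAinj ξ hξ η hη hne)
  have hE : ∀ η, η < omega1 → ∀ k : ℕ,
      {ξ : Ordinal.{0} | ξ < η ∧ A ξ ∩ A η ⊆ Set.Iio k}.Finite := by
    intro η hη k
    have hsub : {ξ : Ordinal.{0} | ξ < η ∧ A ξ ∩ A η ⊆ Set.Iio k} ⊆
        ⋃ c : Fin (k+1), {ξ : Ordinal.{0} | ξ < η ∧ sSup (A ξ ∩ A η) = (c : ℕ)} := by
      rintro ξ ⟨hξη, hsubk⟩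
      have hle : sSup (A ξ ∩ A η) ≤ k := by
        rcases Set.eq_empty_or_nonempty (A ξ ∩ A η) with hemp | hne
        · rw [hemp, csSup_empty]; exact Nat.zero_le k
        · have hfin := hint ξ η (hξη.trans hη) hη (ne_of_lt hξη)
          exact le_of_lt (hsubk (hne.csSup_mem hfin))
      exact Set.mem_iUnion.mpr ⟨⟨sSup (A ξ ∩ A η), by omega⟩, ⟨hξη, rfl⟩⟩
    exact (Set.finite_iUnion (fun c : Fin (k+1) => hLuz η hη (c : ℕ))).subset hsub
  obtain ⟨m, hTunc⟩ := exists_uncountable_fiber not_countable_Iio_omega1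
      (fun α => sSup (A (2*α) ∩ A (2*α+1)) + 1)
  set T : Set Ordinal.{0} :=
    {x | x ∈ Set.Iio omega1 ∧ sSup (A (2*x) ∩ A (2*x+1)) + 1 = m} with hTdef
  have hTsub : T ⊆ Set.Iio omega1 := fun x hx => hx.1
  have hdiag : ∀ τ, τ ∈ T → A (2*τ) ∩ A (2*τ+1) ⊆ Set.Iio m := by
    intro τ hτ x hx
    have hfin := hint (2*τ) (2*τ+1) (two_mul_lt_omega1 hτ.1) (two_mul_add_one_lt_omega1 hτ.1)
      (ne_of_lt (lt_self_add_one _))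
    have hle : x ≤ sSup (A (2*τ) ∩ A (2*τ+1)) := le_csSup hfin.bddAbove hx
    have hmv := hτ.2
    simp only [Set.mem_Iio]
    omega
  set F : Ordinal.{0} → Set Ordinal.{0} := fun β =>
    {α | α ∈ T ∧ α < β ∧ A (2*α) ∩ A (2*β+1) ⊆ Set.Iio m ∧
      A (2*α+1) ∩ A (2*β) ⊆ Set.Iio m} with hFdef
  have hFfin : ∀ β, β ∈ T → (F β).Finite := by
    intro β hβ
    have hfinE := hE (2*β+1) (two_mul_add_one_lt_omega1 hβ.1) m
    have hpre : F β ⊆ (fun α : Ordinal.{0} => 2*α) ⁻¹'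
        {ξ : Ordinal.{0} | ξ < 2*β+1 ∧ A ξ ∩ A (2*β+1) ⊆ Set.Iio m} := by
      rintro α ⟨-, hαβ, h1, -⟩
      exact ⟨(two_mul_lt_of_lt hαβ).trans (lt_self_add_one _), h1⟩
    exact ((hfinE.preimage (two_mul_injective.injOn)).subset hpre)
  obtain ⟨n, hT2unc⟩ := exists_uncountable_fiber hTunc (fun β => (F β).ncard)
  obtain ⟨T', hT'sub, hT'unc, hfree⟩ :=
    freeSet n {x | x ∈ T ∧ (F x).ncard = n} F hT2unc
      (fun β hβ => ⟨hFfin β hβ.1, hβ.2⟩)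
  have hT'T : ∀ x, x ∈ T' → x ∈ T := fun x hx => (hT'sub hx).1
  obtain ⟨e, he1, he2⟩ := exists_omega1_enum hT'unc
  have heT : ∀ α, α < omega1 → e α ∈ T := fun α hα => hT'T _ (he1 α hα)
  have heω : ∀ α, α < omega1 → e α < omega1 := fun α hα => hTsub (heT α hα)
  refine ⟨fun i α => if α < omega1 then
      (if i = 0 then A (2 * e α) else A (2 * e α + 1)) else ∅, ?_, ?_, ?_, ?_⟩
  · intro i α hα
    simp only [if_pos hα]
    by_cases hi : i = 0
    · rw [if_pos hi]; exact hAmem _ (two_mul_lt_omega1 (heω α hα))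
    · rw [if_neg hi]; exact hAmem _ (two_mul_add_one_lt_omega1 (heω α hα))
  · intro i α hα β hβ hne
    simp only [if_pos hα, if_pos hβ]
    have hee : e α ≠ e β := he2 α hα β hβ hne
    by_cases hi : i = 0
    · simp only [if_pos hi]
      exact hAinj _ (two_mul_lt_omega1 (heω α hα)) _ (two_mul_lt_omega1 (heω β hβ))
        (fun h => hee (two_mul_injective h))
    · simp only [if_neg hi]
      exact hAinj _ (two_mul_add_one_lt_omega1 (heω α hα)) _
        (two_mul_add_one_lt_omega1 (heω β hβ)) (idx_ne_one hee)
  · intro i j hij α hα β hβ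
    simp only [if_pos hα, if_pos hβ]
    fin_cases i <;> fin_cases j <;> simp only at hij ⊢
    · exact absurd rfl hij
    · exact hAinj _ (two_mul_lt_omega1 (heω α hα)) _
        (two_mul_add_one_lt_omega1 (heω β hβ)) (idx_ne_mixed _ _)
    · exact hAinj _ (two_mul_add_one_lt_omega1 (heω α hα)) _
        (two_mul_lt_omega1 (heω β hβ)) (fun h => idx_ne_mixed _ _ h.symm)
    · exact absurd rfl hij
  · refine ⟨m, ?_, ?_⟩
    · intro i j hij α hα
      fin_cases i <;> fin_cases j <;> simp only [if_pos hα] <;>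
        first
          | exact absurd hij (by decide)
          | (intro x hx; exact hdiag (e α) (heT α hα) (by simpa using hx))
    · intro α hα β hβ hne hsubU
      have hee : e α ≠ e β := he2 α hα β hβ hne
      have happly : ∀ (i j : Fin 2) (hij' : i ≠ j) (x : ℕ),
          x ∈ (if α < omega1 then (if i = 0 then A (2 * e α) else A (2 * e α + 1)) else ∅) →
          x ∈ (if β < omega1 then (if j = 0 then A (2 * e β) else A (2 * e β + 1)) else ∅) →
          x < m := by
        intro i j hij' x hxi hxj
        have : x ∈ ⋃ (i : Fin 2) (j : Fin 2) (_ : i ≠ j),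
            ((fun i α => if α < omega1 then
              (if i = 0 then A (2 * e α) else A (2 * e α + 1)) else ∅) i α ∩
             (fun i α => if α < omega1 then
              (if i = 0 then A (2 * e α) else A (2 * e α + 1)) else ∅) j β) := by
          exact Set.mem_iUnion.mpr ⟨i, Set.mem_iUnion.mpr ⟨j,
            Set.mem_iUnion.mpr ⟨hij', ⟨hxi, hxj⟩⟩⟩⟩
        exact hsubU this
      rcases lt_or_gt_of_ne hee with h | h
      · have hnotbad : e α ∉ F (e β) :=
          hfree _ (he1 α hα) _ (he1 β hβ) hee
        have hnb : ¬(A (2 * e α) ∩ A (2 * e β + 1) ⊆ Set.Iio m ∧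
            A (2 * e α + 1) ∩ A (2 * e β) ⊆ Set.Iio m) :=
          fun hXY => hnotbad ⟨heT α hα, h, hXY.1, hXY.2⟩
        rcases not_and_or.mp hnb with hX | hX <;>
          obtain ⟨x, hxmem, hxm⟩ := Set.not_subset.mp hX
        · exact hxm (happly 0 1 (by decide) x
            (by simp only [if_pos hα, if_pos rfl]; exact hxmem.1)
            (by simp only [if_pos hβ]; rw [if_neg (by decide : (1 : Fin 2) ≠ 0)]
                exact hxmem.2))
        · exact hxm (happly 1 0 (by decide) x
            (by simp only [if_pos hα]; rw [if_neg (by decide : (1 : Fin 2) ≠ 0)]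
                exact hxmem.1)
            (by simp only [if_pos hβ, if_pos rfl]; exact hxmem.2))
      · have hnotbad : e β ∉ F (e α) :=
          hfree _ (he1 β hβ) _ (he1 α hα) hee.symm
        have hnb : ¬(A (2 * e β) ∩ A (2 * e α + 1) ⊆ Set.Iio m ∧
            A (2 * e β + 1) ∩ A (2 * e α) ⊆ Set.Iio m) :=
          fun hXY => hnotbad ⟨heT β hβ, h, hXY.1, hXY.2⟩
        rcases not_and_or.mp hnb with hX | hX <;>
          obtain ⟨x, hxmem, hxm⟩ := Set.not_subset.mp hX
        · exact hxm (happly 1 0 (by decide) x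
            (by simp only [if_pos hα]; rw [if_neg (by decide : (1 : Fin 2) ≠ 0)]
                exact hxmem.2)
            (by simp only [if_pos hβ, if_pos rfl]; exact hxmem.1))
        · exact hxm (happly 0 1 (by decide) x
            (by simp only [if_pos hα, if_pos rfl]; exact hxmem.2)
            (by simp only [if_pos hβ]; rw [if_neg (by decide : (1 : Fin 2) ≠ 0)]
                exact hxmem.1))

end Aux

/-- if an a.d.-family `𝒜` contains a `2`-Luzin gap then `ℙ_𝒜` has an
uncountable antichain; in particular `ℙ_𝒜` fails the c.c.c. whenever `𝒜` is Luzin. -/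

theorem statement6 (𝒜 : Set (Set ℕ)) (h𝒜 : ADFamily 𝒜) :
    (ContainsNLuzinGap 𝒜 2 →
      ∃ P : Set (Set ℕ × Set ℕ), SplitAntichain 𝒜 P ∧ ¬P.Countable) ∧
    (IsLuzinFamily 𝒜 →
      ∃ P : Set (Set ℕ × Set ℕ), SplitAntichain 𝒜 P ∧ ¬P.Countable) := by
  exact ⟨fun hgap => gap_to_antichain hgap,
    fun hLuz => gap_to_antichain (luzin_to_gap h𝒜 hLuz)⟩
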